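/- Let γ : ℤ → ℂ with γ_{n+1}γ_n ≠ -1 for all n, define α^{(1)}_n = -(γ_{n+1}γ_n + 2γ_{n+1} - 1)/(γ_{n+1}γ_n + 1) and α^{(2)}_n = (γ_{n+1}γ_n - 2γ_n - 1)/(γ_{n+1}γ_n + 1), and assume α^{(j)}_n ≠ 1 for all n and j = 1,2. Let β^{(1)}, β^{(2)} : ℤ → ℂ satisfy β^{(j)}_{n+1} ≠ β^{(j)}_n and (α^{(j)}_{n+1}+1)/(α^{(j)}_{n+1}-1) = -(β^{(j)}_{n+2}-β^{(j)}_{n+1})/(β^{(j)}_{n+1}-β^{(j)}_n) for all n and j = 1,2. Let ω : ℤ → ℂ satisfy β^{(j)}_n + ω_m ≠ 0 for all n,m and j = 1,2. Set χ_m = (1 + (-1)^m)/2 and define u_{n,m} = χ_{m+1}·(α^{(1)}_n + (α^{(1)}_n - 1)(β^{(1)}_{n+1} - β^{(1)}_n)/(β^{(1)}_n + ω_m)) + χ_m·(α^{(2)}_n + (α^{(2)}_n - 1)(β^{(2)}_{n+1} - β^{(2)}_n)/(β^{(2)}_n + ω_m)). Then u satisfies (u_{n+1,m+1}+1)(u_{n,m+1}-1)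 = -(u_{n+1,m}+1)(u_{n,m}-1) for all n,m ∈ ℤ. -/
import Mathlib

lemma key10 (a a' b b' b'' w : ℂ) (hb : b + w ≠ 0) (hb' : b' + w ≠ 0)
    (hrec : (a' + 1) * (b' - b) = -((a' - 1) * (b'' - b'))) :
    (a' + (a' - 1) * (b'' - b') / (b' + w) + 1) * (a + (a - 1) * (b' - b) / (b + w) - 1)
      = (a' + 1) * (a - 1) := by
  field_simp
  linear_combination (a - 1) * (b' + w) * hrec

lemma const10 (g g' g'' : ℂ) (h1 : g' * g + 1 ≠ 0) (h2 : g'' * g' + 1 ≠ 0) :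
    (-((g'' * g' + 2 * g'' - 1) / (g'' * g' + 1)) + 1) *
        (-((g' * g + 2 * g' - 1) / (g' * g + 1)) - 1)
      = -(((g'' * g' - 2 * g' - 1) / (g'' * g' + 1) + 1) *
        ((g' * g - 2 * g - 1) / (g' * g + 1) - 1)) := by
  field_simp
  ring

theorem stmt_10 (γ : ℤ → ℂ) (hγ : ∀ n : ℤ, γ (n + 1) * γ n ≠ -1)
    (α₁ α₂ : ℤ → ℂ)
    (hα₁ : ∀ n : ℤ, α₁ n =
      -((γ (n + 1) * γ n + 2 * γ (n + 1) - 1) / (γ (n + 1) * γ n + 1)))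
    (hα₂ : ∀ n : ℤ, α₂ n =
      (γ (n + 1) * γ n - 2 * γ n - 1) / (γ (n + 1) * γ n + 1))
    (hα₁ne1 : ∀ n : ℤ, α₁ n ≠ 1) (hα₂ne1 : ∀ n : ℤ, α₂ n ≠ 1)
    (β₁ β₂ : ℤ → ℂ)
    (hβ₁ne : ∀ n : ℤ, β₁ (n + 1) ≠ β₁ n) (hβ₂ne : ∀ n : ℤ, β₂ (n + 1) ≠ β₂ n)
    (hβ₁ : ∀ n : ℤ, (α₁ (n + 1) + 1) / (α₁ (n + 1) - 1)
      = -((β₁ (n + 2) - β₁ (n + 1)) / (β₁ (n + 1) - β₁ n)))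
    (hβ₂ : ∀ n : ℤ, (α₂ (n + 1) + 1) / (α₂ (n + 1) - 1)
      = -((β₂ (n + 2) - β₂ (n + 1)) / (β₂ (n + 1) - β₂ n)))
    (ω : ℤ → ℂ)
    (hω₁ : ∀ n m : ℤ, β₁ n + ω m ≠ 0) (hω₂ : ∀ n m : ℤ, β₂ n + ω m ≠ 0)
    (χ : ℤ → ℂ) (hχ : ∀ m : ℤ, χ m = (1 + (-1 : ℂ) ^ m) / 2)
    (u : ℤ → ℤ → ℂ)
    (hu : ∀ n m : ℤ, u n m =
      χ (m + 1) * (α₁ n + (α₁ n - 1) * (β₁ (n + 1) - β₁ n) / (β₁ n + ω m))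
        + χ m * (α₂ n + (α₂ n - 1) * (β₂ (n + 1) - β₂ n) / (β₂ n + ω m))) :
    ∀ n m : ℤ,
      (u (n + 1) (m + 1) + 1) * (u n (m + 1) - 1)
        = -((u (n + 1) m + 1) * (u n m - 1)) := by
  have hχe : ∀ m : ℤ, Even m → χ m = 1 := by
    intro m hm; rw [hχ, hm.neg_one_zpow]; norm_num
  have hχo : ∀ m : ℤ, Odd m → χ m = 0 := by
    intro m hm; rw [hχ, hm.neg_one_zpow]; norm_num
  have hrec1 : ∀ n : ℤ, (α₁ (n + 1) + 1) * (β₁ (n + 1) - β₁ n)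
      = -((α₁ (n + 1) - 1) * (β₁ (n + 2) - β₁ (n + 1))) := by
    intro n
    have ha := sub_ne_zero.mpr (hα₁ne1 (n + 1))
    have hb := sub_ne_zero.mpr (hβ₁ne n)
    have h := hβ₁ n
    field_simp at h
    linear_combination h
  have hrec2 : ∀ n : ℤ, (α₂ (n + 1) + 1) * (β₂ (n + 1) - β₂ n)
      = -((α₂ (n + 1) - 1) * (β₂ (n + 2) - β₂ (n + 1))) := by
    intro n
    have ha := sub_ne_zero.mpr (hα₂ne1 (n + 1))
    have hb := sub_ne_zero.mpr (hβ₂ne n)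
    have h := hβ₂ n
    field_simp at h
    linear_combination h
  have K1 : ∀ n m : ℤ,
      (α₁ (n + 1) + (α₁ (n + 1) - 1) * (β₁ (n + 2) - β₁ (n + 1)) / (β₁ (n + 1) + ω m) + 1) *
        (α₁ n + (α₁ n - 1) * (β₁ (n + 1) - β₁ n) / (β₁ n + ω m) - 1)
      = (α₁ (n + 1) + 1) * (α₁ n - 1) :=
    fun n m => key10 _ _ _ _ _ _ (hω₁ n m) (hω₁ (n + 1) m) (hrec1 n)
  have K2 : ∀ n m : ℤ,
      (α₂ (n + 1) + (α₂ (n + 1) - 1) * (β₂ (n + 2) - β₂ (n + 1)) / (β₂ (n + 1) + ω m) + 1) *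
        (α₂ n + (α₂ n - 1) * (β₂ (n + 1) - β₂ n) / (β₂ n + ω m) - 1)
      = (α₂ (n + 1) + 1) * (α₂ n - 1) :=
    fun n m => key10 _ _ _ _ _ _ (hω₂ n m) (hω₂ (n + 1) m) (hrec2 n)
  have C : ∀ n : ℤ, (α₁ (n + 1) + 1) * (α₁ n - 1) = -((α₂ (n + 1) + 1) * (α₂ n - 1)) := by
    intro n
    have h1 : γ (n + 1) * γ n + 1 ≠ 0 := fun h => hγ n (by linear_combination h)
    have h2 : γ (n + 1 + 1) * γ (n + 1) + 1 ≠ 0 := fun h => hγ (n + 1) (by linear_combination h)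
    rw [hα₁ (n + 1), hα₁ n, hα₂ (n + 1), hα₂ n]
    exact const10 (γ n) (γ (n + 1)) (γ (n + 1 + 1)) h1 h2
  intro n m
  rw [hu (n + 1) (m + 1), hu n (m + 1), hu (n + 1) m, hu n m]
  rw [show n + 1 + 1 = n + 2 from by ring, show m + 1 + 1 = m + 2 from by ring]
  rcases Int.even_or_odd m with he | ho
  · have h1 : Odd (m + 1) := he.add_one
    have h2 : Even (m + 2) := by obtain ⟨k, hk⟩ := he; exact ⟨k + 1, by omega⟩
    rw [hχe m he, hχo (m + 1) h1, hχe (m + 2) h2]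
    simp only [zero_mul, one_mul, zero_add, add_zero]
    rw [K1 n (m + 1), K2 n m]
    exact C n
  · have h1 : Even (m + 1) := ho.add_one
    have h2 : Odd (m + 2) := by obtain ⟨k, hk⟩ := ho; exact ⟨k + 1, by omega⟩
    rw [hχo m ho, hχe (m + 1) h1, hχo (m + 2) h2]
    simp only [zero_mul, one_mul, zero_add, add_zero]
    rw [K2 n (m + 1), K1 n m]
    linear_combination C n
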